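/- Let T and X be A-bounded operators on H admitting A-adjoints (i.e. there exist Ts, Xs with A∘Ts = T*∘A and A∘Xs = X*∘A). Then w_𝔸([[T,X],[0,0]]) ≤ w_A(T) + (1/2)·‖X‖_A. -/

import Mathlib

noncomputable def sInner {E : Type*} [NormedAddCommGroup E] [InnerProductSpace ℂ E]
    (A : E →L[ℂ] E) (x y : E) : ℂ := inner ℂ (A x) y

noncomputable def sNorm {E : Type*} [NormedAddCommGroup E] [InnerProductSpace ℂ E]
    (A : E →L[ℂ] E) (x : E) : ℝ := Real.sqrt (sInner A x x).re

/-- The `A`-operator seminorm. -/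
noncomputable def opSNorm {E : Type*} [NormedAddCommGroup E] [InnerProductSpace ℂ E]
    (A T : E →L[ℂ] E) : ℝ := sSup {c | ∃ x : E, sNorm A x = 1 ∧ c = sNorm A (T x)}

/-- The `A`-numerical radius. -/
noncomputable def numRad {E : Type*} [NormedAddCommGroup E] [InnerProductSpace ℂ E]
    (A T : E →L[ℂ] E) : ℝ := sSup {c | ∃ x : E, sNorm A x = 1 ∧ c = ‖sInner A (T x) x‖}

/-- `T` is `A`-bounded. -/
def ABounded {E : Type*} [NormedAddCommGroup E] [InnerProductSpace ℂ E]
    (A T : E →L[ℂ] E) : Prop := ∃ c > 0, ∀ x : E, sNorm A (T x) ≤ c * sNorm A x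

/-- The 2×2 block operator `[[T, X], [Y, S]]` on `H ⊕ H` (with the ℓ² product structure). -/
noncomputable def blk {H : Type*} [NormedAddCommGroup H] [InnerProductSpace ℂ H]
    (T X Y S : H →L[ℂ] H) : WithLp 2 (H × H) →L[ℂ] WithLp 2 (H × H) :=
  ((WithLp.prodContinuousLinearEquiv 2 ℂ H H).symm.toContinuousLinearMap.comp
    (((T.coprod X).prod (Y.coprod S)).comp
      (WithLp.prodContinuousLinearEquiv 2 ℂ H H).toContinuousLinearMap))

/-- The diagonal operator `𝔸 = diag(A, A)` on `H ⊕ H`. -/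
noncomputable def twoA {H : Type*} [NormedAddCommGroup H] [InnerProductSpace ℂ H]
    (A : H →L[ℂ] H) : WithLp 2 (H × H) →L[ℂ] WithLp 2 (H × H) := blk A 0 0 A

section Aux

variable {H : Type*} [NormedAddCommGroup H] [InnerProductSpace ℂ H]

/-- A positive operator has a "square-root representation" of its semi-inner product. -/
lemma exists_rep [CompleteSpace H] (A : H →L[ℂ] H) (hA : A.IsPositive) :
    ∃ R : H →L[ℂ] H, (∀ x y : H, sInner A x y = inner ℂ (R x) (R y)) ∧
      ∀ x : H, sNorm A x = ‖R x‖ := by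
  have h0 : (0 : H →L[ℂ] H) ≤ A := (ContinuousLinearMap.nonneg_iff_isPositive A).2 hA
  obtain ⟨R, hsa, hmul⟩ : ∃ R : H →L[ℂ] H, IsSelfAdjoint R ∧ R * R = A :=
    ⟨CFC.sqrt A, IsSelfAdjoint.of_nonneg (CFC.sqrt_nonneg A), CFC.sqrt_mul_sqrt_self A h0⟩
  have hrep : ∀ x y : H, sInner A x y = inner ℂ (R x) (R y) := by
    intro x y
    rw [sInner, ← hmul]
    calc (inner ℂ ((R * R) x) y : ℂ)
        = inner ℂ ((ContinuousLinearMap.adjoint R) (R x)) y := by rw [hsa.adjoint_eq]; rfl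
      _ = inner ℂ (R x) (R y) := ContinuousLinearMap.adjoint_inner_left _ _ _
  refine ⟨R, hrep, fun x => ?_⟩
  rw [sNorm, hrep]
  have h := inner_self_eq_norm_sq (𝕜 := ℂ) (R x)
  rw [RCLike.re_to_complex] at h
  rw [h, Real.sqrt_sq (norm_nonneg _)]

variable {A R : H →L[ℂ] H}
variable (hrep : ∀ x y : H, sInner A x y = inner ℂ (R x) (R y))
variable (hnorm : ∀ x : H, sNorm A x = ‖R x‖)

include hrep hnorm in
lemma sInner_le_sNorm (u v : H) : ‖sInner A u v‖ ≤ sNorm A u * sNorm A v := by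
  rw [hrep, hnorm, hnorm]
  exact norm_inner_le_norm _ _

include hnorm in
lemma sNorm_smul (c : ℂ) (x : H) : sNorm A (c • x) = ‖c‖ * sNorm A x := by
  rw [hnorm, hnorm, map_smul, norm_smul]

include hrep hnorm in
lemma sq_sInner_self (x : H) : (sInner A x x).re = sNorm A x ^ 2 := by
  rw [hrep, hnorm]
  have h := inner_self_eq_norm_sq (𝕜 := ℂ) (R x)
  rw [RCLike.re_to_complex] at h
  exact h

lemma numRad_nonneg (A T : H →L[ℂ] H) : 0 ≤ numRad A T :=
  Real.sSup_nonneg (by rintro c ⟨x, hx, rfl⟩; exact norm_nonneg _)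

lemma opSNorm_nonneg (A T : H →L[ℂ] H) : 0 ≤ opSNorm A T :=
  Real.sSup_nonneg (by rintro c ⟨x, hx, rfl⟩; exact Real.sqrt_nonneg _)

lemma twoA_sInner (A : H →L[ℂ] H) (v u : WithLp 2 (H × H)) :
    sInner (twoA A) v u = sInner A v.ofLp.1 u.ofLp.1 + sInner A v.ofLp.2 u.ofLp.2 := by
  have h : sInner (twoA A) v u
      = (inner ℂ (A v.ofLp.1 + (0 : H →L[ℂ] H) v.ofLp.2) u.ofLp.1
        + inner ℂ ((0 : H →L[ℂ] H) v.ofLp.1 + A v.ofLp.2) u.ofLp.2 : ℂ) := rfl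
  rw [h]
  simp [sInner]

lemma blk_fst (T X Y S : H →L[ℂ] H) (u : WithLp 2 (H × H)) :
    ((blk T X Y S) u).ofLp.1 = T u.ofLp.1 + X u.ofLp.2 := rfl

lemma blk_snd (T X Y S : H →L[ℂ] H) (u : WithLp 2 (H × H)) :
    ((blk T X Y S) u).ofLp.2 = Y u.ofLp.1 + S u.ofLp.2 := rfl

include hrep hnorm in
lemma numRad_bddAbove {T : H →L[ℂ] H} (hT : ABounded A T) :
    BddAbove {c | ∃ x : H, sNorm A x = 1 ∧ c = ‖sInner A (T x) x‖} := by
  obtain ⟨cT, _, hb⟩ := hT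
  refine ⟨cT, ?_⟩
  rintro c ⟨x, hx, rfl⟩
  calc ‖sInner A (T x) x‖ ≤ sNorm A (T x) * sNorm A x := sInner_le_sNorm hrep hnorm _ _
    _ ≤ (cT * sNorm A x) * sNorm A x :=
        mul_le_mul_of_nonneg_right (hb x) (Real.sqrt_nonneg _)
    _ = cT := by rw [hx]; ring

lemma opSNorm_bddAbove {T : H →L[ℂ] H} (hT : ABounded A T) :
    BddAbove {c | ∃ x : H, sNorm A x = 1 ∧ c = sNorm A (T x)} := by
  obtain ⟨cT, _, hb⟩ := hT
  refine ⟨cT, ?_⟩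
  rintro c ⟨x, hx, rfl⟩
  calc sNorm A (T x) ≤ cT * sNorm A x := hb x
    _ = cT := by rw [hx, mul_one]

include hrep hnorm in
lemma numRad_bound {T : H →L[ℂ] H} (hT : ABounded A T) (x : H) :
    ‖sInner A (T x) x‖ ≤ numRad A T * sNorm A x ^ 2 := by
  by_cases h : sNorm A x = 0
  · have h1 : ‖sInner A (T x) x‖ ≤ sNorm A (T x) * sNorm A x := sInner_le_sNorm hrep hnorm _ _
    rw [h, mul_zero] at h1
    rw [h]
    simpa using h1
  · set t : ℝ := sNorm A x with ht
    have htpos : 0 < t := lt_of_le_of_ne (Real.sqrt_nonneg _) (Ne.symm h)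
    set c : ℂ := ((t : ℂ))⁻¹ with hc
    have hnc : ‖c‖ = t⁻¹ := by
      rw [hc, norm_inv, Complex.norm_real, Real.norm_of_nonneg htpos.le]
    have hx1 : sNorm A (c • x) = 1 := by
      rw [sNorm_smul hnorm, hnc, ← ht, inv_mul_cancel₀ htpos.ne']
    have hval : ‖sInner A (T (c • x)) (c • x)‖ = t⁻¹ ^ 2 * ‖sInner A (T x) x‖ := by
      rw [map_smul, sInner]
      rw [map_smul, inner_smul_left, inner_smul_right]
      rw [norm_mul, norm_mul, RCLike.norm_conj, hnc, ← sInner]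
      ring
    have hmem : ‖sInner A (T (c • x)) (c • x)‖ ∈
        {c | ∃ x : H, sNorm A x = 1 ∧ c = ‖sInner A (T x) x‖} := ⟨c • x, hx1, rfl⟩
    have hle : ‖sInner A (T (c • x)) (c • x)‖ ≤ numRad A T :=
      le_csSup (numRad_bddAbove hrep hnorm hT) hmem
    rw [hval] at hle
    have h2 : t ^ 2 * (t⁻¹ ^ 2 * ‖sInner A (T x) x‖) ≤ t ^ 2 * numRad A T :=
      mul_le_mul_of_nonneg_left hle (sq_nonneg t)
    have h3 : t ^ 2 * (t⁻¹ ^ 2 * ‖sInner A (T x) x‖) = ‖sInner A (T x) x‖ := by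
      field_simp
    rw [h3] at h2
    linarith [h2]

include hnorm in
lemma opSNorm_bound {T : H →L[ℂ] H} (hT : ABounded A T) (x : H) :
    sNorm A (T x) ≤ opSNorm A T * sNorm A x := by
  by_cases h : sNorm A x = 0
  · obtain ⟨cT, hcT, hb⟩ := hT
    have := hb x
    rw [h, mul_zero] at this
    rw [h, mul_zero]
    exact this
  · set t : ℝ := sNorm A x with ht
    have htpos : 0 < t := lt_of_le_of_ne (Real.sqrt_nonneg _) (Ne.symm h)
    set c : ℂ := ((t : ℂ))⁻¹ with hc
    have hnc : ‖c‖ = t⁻¹ := by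
      rw [hc, norm_inv, Complex.norm_real, Real.norm_of_nonneg htpos.le]
    have hx1 : sNorm A (c • x) = 1 := by
      rw [sNorm_smul hnorm, hnc, ← ht, inv_mul_cancel₀ htpos.ne']
    have hval : sNorm A (T (c • x)) = t⁻¹ * sNorm A (T x) := by
      rw [map_smul, sNorm_smul hnorm, hnc]
    have hle : sNorm A (T (c • x)) ≤ opSNorm A T :=
      le_csSup (opSNorm_bddAbove hT) ⟨c • x, hx1, rfl⟩
    rw [hval] at hle
    have h2 : t * (t⁻¹ * sNorm A (T x)) ≤ t * opSNorm A T :=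
      mul_le_mul_of_nonneg_left hle htpos.le
    have h3 : t * (t⁻¹ * sNorm A (T x)) = sNorm A (T x) := by field_simp
    rw [h3] at h2
    linarith [h2]

end Aux

theorem stmt6 {H : Type*} [NormedAddCommGroup H] [InnerProductSpace ℂ H] [CompleteSpace H]
    (A : H →L[ℂ] H) (hA : A.IsPositive)
    (T X : H →L[ℂ] H) (hT : ABounded A T) (hX : ABounded A X)
    (hTadm : ∃ Ts : H →L[ℂ] H, A.comp Ts = (ContinuousLinearMap.adjoint T).comp A)
    (hXadm : ∃ Xs : H →L[ℂ] H, A.comp Xs = (ContinuousLinearMap.adjoint X).comp A) :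
    numRad (twoA A) (blk T X 0 0) ≤ numRad A T + (1 / 2) * opSNorm A X := by
  obtain ⟨R, hrep, hnorm⟩ := exists_rep A hA
  have hw0 : 0 ≤ numRad A T := numRad_nonneg A T
  have hN0 : 0 ≤ opSNorm A X := opSNorm_nonneg A X
  apply Real.sSup_le
  · rintro c ⟨u, hu, rfl⟩
    set x : H := u.ofLp.1 with hxdef
    set y : H := u.ofLp.2 with hydef
    set a : ℝ := sNorm A x with ha
    set b : ℝ := sNorm A y with hb
    have ha0 : 0 ≤ a := Real.sqrt_nonneg _
    have hb0 : 0 ≤ b := Real.sqrt_nonneg _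
    -- the unit condition
    have hsum : (sInner (twoA A) u u).re = a ^ 2 + b ^ 2 := by
      rw [twoA_sInner, Complex.add_re, sq_sInner_self hrep hnorm, sq_sInner_self hrep hnorm]
    have hab : a ^ 2 + b ^ 2 = 1 := by
      have h1 : Real.sqrt (a ^ 2 + b ^ 2) = 1 := by rw [← hsum]; exact hu
      have h2 : 0 ≤ a ^ 2 + b ^ 2 := by positivity
      nlinarith [Real.sq_sqrt h2, h1]
    -- the form
    have hform : sInner (twoA A) ((blk T X 0 0) u) u
        = sInner A (T x) x + sInner A (X y) x := by
      rw [twoA_sInner, blk_fst, blk_snd]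
      simp [sInner, map_add, inner_add_left]
      rfl
    have key1 : ‖sInner A (T x) x‖ ≤ numRad A T * a ^ 2 := by
      rw [ha]; exact numRad_bound hrep hnorm hT x
    have key2 : ‖sInner A (X y) x‖ ≤ (opSNorm A X * b) * a := by
      calc ‖sInner A (X y) x‖ ≤ sNorm A (X y) * sNorm A x := sInner_le_sNorm hrep hnorm _ _
        _ ≤ (opSNorm A X * b) * a :=
            mul_le_mul_of_nonneg_right (opSNorm_bound hnorm hX y) ha0
    calc ‖sInner (twoA A) ((blk T X 0 0) u) u‖
        ≤ ‖sInner A (T x) x‖ + ‖sInner A (X y) x‖ := by rw [hform]; exact norm_add_le _ _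
      _ ≤ numRad A T * a ^ 2 + (opSNorm A X * b) * a := add_le_add key1 key2
      _ ≤ numRad A T + (1 / 2) * opSNorm A X := by nlinarith [sq_nonneg (a - b), sq_nonneg b]
  · linarith
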